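/- arXiv:1601.01916 — 2 statements merged into one kernel-verified Lean document; each statement's English description precedes it below -/
import Mathlib

section
/- Let x, z ∈ ℝ² with x ≠ z, let ω ∈ ℝ, and let t, n be an orthonormal pair of vectors in ℝ². Define the complex numbers A = (1/(2π)) ∫₀^{2π} exp(i·ω·⟨θ(s), x − z⟩) ds, B = (√2/(2π)) ∫₀^{2π} ⟨θ(s), t⟩ · exp(i·ω·⟨θ(s), x − z⟩) ds, and C = (√2/(2π)) ∫₀^{2π} ⟨θ(s), n⟩ · exp(i·ω·⟨θ(s), x − z⟩) ds. Then A² + B² + C² = J₀(ω‖x − z‖)² − 2·J₁(ω‖x − z‖)² (an equality of complex numbers whose right-hand side is real); in particular the value of the subspace-migration functional at z for a single contributing point x is J₀(ω‖x − z‖)² − 2·J₁(ω‖x − z‖)². -/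
open MeasureTheory Real Filter
open scoped RealInnerProductSpace

/-- Bessel function of the first kind of order 0 (Bessel's integral). -/
noncomputable def J0 (u : ℝ) : ℝ := (1 / π) * ∫ τ in (0:ℝ)..π, Real.cos (u * Real.sin τ)

/-- Bessel function of the first kind of order 1 (Bessel's integral). -/
noncomputable def J1 (u : ℝ) : ℝ := (1 / π) * ∫ τ in (0:ℝ)..π, Real.cos (τ - u * Real.sin τ)

/-- The unit direction `θ(s) = (cos s, sin s)` in `ℝ²`. -/
noncomputable def unitDir (s : ℝ) : EuclideanSpace ℝ (Fin 2) := WithLp.toLp 2 ![Real.cos s, Real.sin s]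

open intervalIntegral

lemma periodic_shift (f : ℝ → ℂ) (hf : Function.Periodic f (2*π)) (c : ℝ) :
    ∫ s in (0:ℝ)..(2*π), f (s + c) = ∫ s in (0:ℝ)..(2*π), f s := by
  rw [intervalIntegral.integral_comp_add_right]
  simpa [add_comm] using hf.intervalIntegral_add_eq c 0

lemma periodic_shiftR (f : ℝ → ℝ) (hf : Function.Periodic f (2*π)) (c : ℝ) :
    ∫ s in (0:ℝ)..(2*π), f (s + c) = ∫ s in (0:ℝ)..(2*π), f s := by
  rw [intervalIntegral.integral_comp_add_right]
  simpa [add_comm] using hf.intervalIntegral_add_eq c 0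

-- R2 : ∫₀^{2π} sin(u cos s) ds = 0
lemma R2 (u : ℝ) : ∫ s in (0:ℝ)..(2*π), Real.sin (u * Real.cos s) = 0 := by
  have h := periodic_shiftR (fun s => Real.sin (u * Real.cos s))
    (fun s => by simp [Real.cos_add_two_pi]) π
  have h2 : ∀ s : ℝ, Real.sin (u * Real.cos (s + π)) = - Real.sin (u * Real.cos s) := by
    intro s; simp [Real.cos_add_pi]
  rw [intervalIntegral.integral_congr (g := fun s => - Real.sin (u * Real.cos s))
    (fun s _ => h2 s)] at h
  rw [intervalIntegral.integral_neg] at h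
  linarith

-- R3 : ∫₀^{2π} cos s * cos(u cos s) ds = 0
lemma R3 (u : ℝ) : ∫ s in (0:ℝ)..(2*π), Real.cos s * Real.cos (u * Real.cos s) = 0 := by
  have h := periodic_shiftR (fun s => Real.cos s * Real.cos (u * Real.cos s))
    (fun s => by simp [Real.cos_add_two_pi]) π
  have h2 : ∀ s : ℝ, Real.cos (s+π) * Real.cos (u * Real.cos (s + π))
      = - (Real.cos s * Real.cos (u * Real.cos s)) := by
    intro s; simp [Real.cos_add_pi]
  rw [intervalIntegral.integral_congr
    (g := fun s => - (Real.cos s * Real.cos (u * Real.cos s))) (fun s _ => h2 s)] at h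
  rw [intervalIntegral.integral_neg] at h
  linarith

lemma split2pi (f : ℝ → ℝ) (hc : Continuous f) (h : ∀ s, f (s + π) = f s) :
    ∫ s in (0:ℝ)..(2*π), f s = 2 * ∫ s in (0:ℝ)..π, f s := by
  have h1 : (∫ s in (0:ℝ)..π, f s) + ∫ s in π..(2*π), f s = ∫ s in (0:ℝ)..(2*π), f s :=
    intervalIntegral.integral_add_adjacent_intervals (a := (0:ℝ)) (b := π) (c := 2*π)
      (hc.intervalIntegrable _ _) (hc.intervalIntegrable _ _)
  have h2 : ∫ s in π..(2*π), f s = ∫ s in (0:ℝ)..π, f s := by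
    have h3 := intervalIntegral.integral_comp_add_right (a := (0:ℝ)) (b := π) (d := π) f
    rw [zero_add] at h3
    have h4 : π + π = 2 * π := by ring
    rw [h4] at h3
    rw [← h3]
    exact intervalIntegral.integral_congr (fun s _ => h s)
  linarith

lemma refl_zero (f : ℝ → ℝ) (h : ∀ s, f (π - s) = - f s) :
    ∫ s in (0:ℝ)..π, f s = 0 := by
  have h1 : ∫ s in (0:ℝ)..π, f (π - s) = ∫ s in (0:ℝ)..π, f s := by
    simpa using intervalIntegral.integral_comp_sub_left (a := (0:ℝ)) (b := π) f π
  rw [intervalIntegral.integral_congr (g := fun s => - f s) (fun s _ => h s),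
    intervalIntegral.integral_neg] at h1
  linarith


lemma R1 (u : ℝ) : ∫ s in (0:ℝ)..(2*π), Real.cos (u * Real.cos s) = 2 * π * J0 u := by
  have hs := periodic_shiftR (fun s => Real.cos (u * Real.cos s))
    (fun s => by simp [Real.cos_add_two_pi]) (π/2)
  have he : ∀ s : ℝ, Real.cos (u * Real.cos (s + π/2)) = Real.cos (u * Real.sin s) := by
    intro s
    rw [show s + π/2 = s + π/2 by rfl, Real.cos_add]
    simp [mul_comm]
  rw [intervalIntegral.integral_congr (g := fun s => Real.cos (u * Real.sin s))
    (fun s _ => he s)] at hs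
  rw [← hs]
  rw [split2pi _ (by fun_prop) (fun s => by simp [Real.sin_add_pi])]
  have hπ : (π:ℝ) ≠ 0 := Real.pi_ne_zero
  rw [J0]; field_simp

lemma R4 (u : ℝ) : ∫ s in (0:ℝ)..(2*π), Real.cos s * Real.sin (u * Real.cos s)
    = 2 * π * J1 u := by
  have hs := periodic_shiftR (fun s => Real.cos s * Real.sin (u * Real.cos s))
    (fun s => by simp [Real.cos_add_two_pi]) (-(π/2))
  have he : ∀ s : ℝ, Real.cos (s + -(π/2)) * Real.sin (u * Real.cos (s + -(π/2)))
      = Real.sin s * Real.sin (u * Real.sin s) := by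
    intro s
    have : Real.cos (s + -(π/2)) = Real.sin s := by
      rw [Real.cos_add]; simp
    rw [this]
  rw [intervalIntegral.integral_congr (g := fun s => Real.sin s * Real.sin (u * Real.sin s))
    (fun s _ => he s)] at hs
  rw [← hs]
  rw [split2pi _ (by fun_prop) (fun s => by simp [Real.sin_add_pi])]
  -- now need: 2 * ∫₀^π sin τ sin(u sin τ) = 2π J1 u
  have hz : ∫ τ in (0:ℝ)..π, Real.cos τ * Real.cos (u * Real.sin τ) = 0 := by
    apply refl_zero
    intro s; simp [Real.sin_pi_sub, Real.cos_pi_sub]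
  have hJ : ∫ τ in (0:ℝ)..π, Real.cos (τ - u * Real.sin τ)
      = (∫ τ in (0:ℝ)..π, Real.cos τ * Real.cos (u * Real.sin τ))
        + ∫ τ in (0:ℝ)..π, Real.sin τ * Real.sin (u * Real.sin τ) := by
    rw [← intervalIntegral.integral_add ((by fun_prop : Continuous fun τ => Real.cos τ * Real.cos (u * Real.sin τ)).intervalIntegrable _ _) ((by fun_prop : Continuous fun τ => Real.sin τ * Real.sin (u * Real.sin τ)).intervalIntegrable _ _)]
    exact intervalIntegral.integral_congr (fun s _ => by rw [Real.cos_sub])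
  have hπ : (π:ℝ) ≠ 0 := Real.pi_ne_zero
  rw [J1]; rw [hz, zero_add] at hJ; rw [hJ]; field_simp; ring
  exact intervalIntegral.integral_congr (fun s _ => by
    show Real.sin s * Real.sin (Real.sin s * u) = Real.sin s * Real.sin (u * Real.sin s); ring)

lemma expand_exp (u c : ℝ) : Complex.exp (Complex.I * u * c)
    = ((Real.cos (u*c) : ℝ) : ℂ) + ((Real.sin (u*c) : ℝ) : ℂ) * Complex.I := by
  rw [show Complex.I * (u:ℂ) * (c:ℂ) = ((u*c : ℝ) : ℂ) * Complex.I by push_cast; ring,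
    Complex.exp_mul_I, Complex.ofReal_cos, Complex.ofReal_sin]

lemma CE (u : ℝ) : ∫ s in (0:ℝ)..(2*π), Complex.exp (Complex.I * u * (Real.cos s : ℂ))
    = 2 * π * J0 u := by
  rw [intervalIntegral.integral_congr (g := fun s =>
      ((Real.cos (u * Real.cos s) : ℝ) : ℂ) + ((Real.sin (u * Real.cos s) : ℝ) : ℂ) * Complex.I)
    (fun s _ => expand_exp u (Real.cos s))]
  rw [intervalIntegral.integral_add
    (((by fun_prop : Continuous fun s => ((Real.cos (u * Real.cos s) : ℝ) : ℂ)).intervalIntegrable _ _))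
    (((by fun_prop : Continuous fun s => ((Real.sin (u * Real.cos s) : ℝ) : ℂ) * Complex.I).intervalIntegrable _ _)),
    intervalIntegral.integral_mul_const, intervalIntegral.integral_ofReal,
    intervalIntegral.integral_ofReal, R1, R2]
  push_cast; ring

lemma CC (u : ℝ) : ∫ s in (0:ℝ)..(2*π),
      ((Real.cos s : ℝ) : ℂ) * Complex.exp (Complex.I * u * (Real.cos s : ℂ))
    = 2 * π * J1 u * Complex.I := by
  rw [intervalIntegral.integral_congr (g := fun s =>
      ((Real.cos s * Real.cos (u * Real.cos s) : ℝ) : ℂ)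
        + ((Real.cos s * Real.sin (u * Real.cos s) : ℝ) : ℂ) * Complex.I)
    (fun s _ => by rw [expand_exp u (Real.cos s)]; push_cast; ring)]
  rw [intervalIntegral.integral_add
    (((by fun_prop : Continuous fun s => ((Real.cos s * Real.cos (u * Real.cos s) : ℝ) : ℂ)).intervalIntegrable _ _))
    (((by fun_prop : Continuous fun s => ((Real.cos s * Real.sin (u * Real.cos s) : ℝ) : ℂ) * Complex.I).intervalIntegrable _ _)),
    intervalIntegral.integral_mul_const, intervalIntegral.integral_ofReal,
    intervalIntegral.integral_ofReal, R3, R4]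
  push_cast; ring

lemma refl_zeroC (f : ℝ → ℂ) (h : ∀ s, f (2*π - s) = - f s) :
    ∫ s in (0:ℝ)..(2*π), f s = 0 := by
  have h1 : ∫ s in (0:ℝ)..(2*π), f (2*π - s) = ∫ s in (0:ℝ)..(2*π), f s := by
    simpa using intervalIntegral.integral_comp_sub_left (a := (0:ℝ)) (b := 2*π) f (2*π)
  rw [intervalIntegral.integral_congr (g := fun s => - f s) (fun s _ => h s),
    intervalIntegral.integral_neg] at h1
  have : (2:ℂ) * ∫ s in (0:ℝ)..(2*π), f s = 0 := by rw [two_mul]; linear_combination -h1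
  simpa using this

lemma CS (u : ℝ) : ∫ s in (0:ℝ)..(2*π),
      ((Real.sin s : ℝ) : ℂ) * Complex.exp (Complex.I * u * (Real.cos s : ℂ)) = 0 := by
  apply refl_zeroC
  intro s
  have hc : Real.cos (2*π - s) = Real.cos s := by simp [Real.cos_sub]
  have hs : Real.sin (2*π - s) = - Real.sin s := by simp [Real.sin_sub]
  simp only [hc, hs]
  push_cast; ring


lemma inner_unitDir (s : ℝ) (v : EuclideanSpace ℝ (Fin 2)) :
    (⟪unitDir s, v⟫ : ℝ) = Real.cos s * v 0 + Real.sin s * v 1 := by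
  simp [unitDir, PiLp.inner_apply, Fin.sum_univ_two]; ring

lemma norm_sq_expand (v : EuclideanSpace ℝ (Fin 2)) :
    (v 0)^2 + (v 1)^2 = ‖v‖^2 := by
  rw [EuclideanSpace.norm_eq]
  rw [Real.sq_sqrt (by positivity)]
  simp [Fin.sum_univ_two, sq_abs]

lemma inner_expand (v w : EuclideanSpace ℝ (Fin 2)) :
    (⟪v, w⟫ : ℝ) = v 0 * w 0 + v 1 * w 1 := by
  simp [PiLp.inner_apply, Fin.sum_univ_two]; ring

lemma exists_angle (v : EuclideanSpace ℝ (Fin 2)) (hv : v ≠ 0) :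
    ∃ φ : ℝ, v 0 = ‖v‖ * Real.cos φ ∧ v 1 = ‖v‖ * Real.sin φ := by
  have hr : ‖v‖ ≠ 0 := norm_ne_zero_iff.mpr hv
  have hab : (v 0)^2 + (v 1)^2 = ‖v‖^2 := norm_sq_expand v
  set c : ℂ := ⟨v 0 / ‖v‖, v 1 / ‖v‖⟩ with hc
  have habs : ‖c‖ = 1 := by
    rw [Complex.norm_def, Complex.normSq_mk]
    have h1 : v 0 / ‖v‖ * (v 0 / ‖v‖) + v 1 / ‖v‖ * (v 1 / ‖v‖) = 1 := by
      field_simp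
      linear_combination hab
    rw [h1, Real.sqrt_one]
  have hexp := Complex.norm_mul_exp_arg_mul_I c
  rw [habs] at hexp
  simp only [Complex.ofReal_one, one_mul] at hexp
  refine ⟨Complex.arg c, ?_, ?_⟩
  · have := congrArg Complex.re hexp
    rw [Complex.exp_ofReal_mul_I_re] at this
    have h0 : v 0 / ‖v‖ = Real.cos (Complex.arg c) := this.symm
    field_simp at h0
    linarith [h0]
  · have := congrArg Complex.im hexp
    rw [Complex.exp_ofReal_mul_I_im] at this
    have h0 : v 1 / ‖v‖ = Real.sin (Complex.arg c) := this.symm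
    field_simp at h0
    linarith [h0]

lemma parseval (t0 t1 n0 n1 c s : ℝ) (h1 : t0^2+t1^2 = 1) (h2 : n0^2+n1^2 = 1)
    (h3 : t0*n0 + t1*n1 = 0) (hcs : c^2 + s^2 = 1) :
    (t0*c + t1*s)^2 + (n0*c + n1*s)^2 = 1 := by
  set d := t0*n1 - t1*n0 with hd
  have hd2 : d^2 = 1 := by
    rw [hd]; linear_combination (n0^2+n1^2) * h1 + h2 - (t0*n0+t1*n1) * h3
  have hn0 : n0 = -(d*t1) := by rw [hd]; linear_combination t0*h3 - n0*h1
  have hn1 : n1 = d*t0 := by rw [hd]; linear_combination t1*h3 - n1*h1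
  rw [hn0, hn1]
  linear_combination (t1*c - t0*s)^2 * hd2 + (c^2+s^2) * h1 + hcs
lemma circ_mean0 (u φ : ℝ) :
    ∫ s in (0:ℝ)..(2*π), Complex.exp (Complex.I * u * ((Real.cos (s - φ) : ℝ) : ℂ))
    = 2 * π * J0 u := by
  have hper : Function.Periodic
      (fun s => Complex.exp (Complex.I * u * ((Real.cos (s - φ) : ℝ) : ℂ))) (2*π) := by
    intro s
    have : s + 2*π - φ = (s - φ) + 2*π := by ring
    simp [this, Real.cos_add_two_pi]
  rw [← periodic_shift _ hper φ]
  rw [intervalIntegral.integral_congr (g := fun s =>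
      Complex.exp (Complex.I * u * ((Real.cos s : ℝ) : ℂ)))
    (fun s _ => by simp)]
  exact CE u

lemma circ_mean1 (u φ t0 t1 : ℝ) :
    ∫ s in (0:ℝ)..(2*π), ((Real.cos s * t0 + Real.sin s * t1 : ℝ) : ℂ) *
        Complex.exp (Complex.I * u * ((Real.cos (s - φ) : ℝ) : ℂ))
    = 2 * π * (J1 u) * (t0 * Real.cos φ + t1 * Real.sin φ) * Complex.I := by
  have hper : Function.Periodic
      (fun s => ((Real.cos s * t0 + Real.sin s * t1 : ℝ) : ℂ) *
        Complex.exp (Complex.I * u * ((Real.cos (s - φ) : ℝ) : ℂ))) (2*π) := by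
    intro s
    have : s + 2*π - φ = (s - φ) + 2*π := by ring
    simp [this, Real.cos_add_two_pi, Real.sin_add_two_pi]
  rw [← periodic_shift _ hper φ]
  rw [intervalIntegral.integral_congr (g := fun s =>
      ((t0 * Real.cos φ + t1 * Real.sin φ : ℝ) : ℂ) *
        (((Real.cos s : ℝ) : ℂ) * Complex.exp (Complex.I * u * ((Real.cos s : ℝ) : ℂ)))
      + ((t1 * Real.cos φ - t0 * Real.sin φ : ℝ) : ℂ) *
        (((Real.sin s : ℝ) : ℂ) * Complex.exp (Complex.I * u * ((Real.cos s : ℝ) : ℂ))))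
    (fun s _ => by
      simp only [add_sub_cancel_right, Real.cos_add, Real.sin_add]
      push_cast
      ring)]
  rw [intervalIntegral.integral_add
    (((by fun_prop : Continuous fun s => ((t0 * Real.cos φ + t1 * Real.sin φ : ℝ) : ℂ) *
        (((Real.cos s : ℝ) : ℂ) * Complex.exp (Complex.I * u * ((Real.cos s : ℝ) : ℂ)))).intervalIntegrable _ _))
    (((by fun_prop : Continuous fun s => ((t1 * Real.cos φ - t0 * Real.sin φ : ℝ) : ℂ) *
        (((Real.sin s : ℝ) : ℂ) * Complex.exp (Complex.I * u * ((Real.cos s : ℝ) : ℂ)))).intervalIntegrable _ _)),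
    intervalIntegral.integral_const_mul, intervalIntegral.integral_const_mul, CC, CS]
  push_cast; ring


/-- The single-frequency subspace-migration value at `z` for a single contributing point `x`:
with `A`, `B`, `C` the (suitably normalized) circular means, `A² + B² + C²` equals
`J₀(ω‖x − z‖)² − 2 J₁(ω‖x − z‖)²`. -/
theorem subspace_migration_single_point (x z : EuclideanSpace ℝ (Fin 2)) (hxz : x ≠ z)
    (ω : ℝ) (t n : EuclideanSpace ℝ (Fin 2))
    (ht : ‖t‖ = 1) (hn : ‖n‖ = 1) (htn : (⟪t, n⟫ : ℝ) = 0)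
    (A B C : ℂ)
    (hA : A = (1 / (2 * (π : ℂ))) *
        ∫ s in (0:ℝ)..(2 * π),
          Complex.exp (Complex.I * (ω : ℂ) * ((⟪unitDir s, x - z⟫ : ℝ) : ℂ)))
    (hB : B = ((Real.sqrt 2 : ℝ) : ℂ) / (2 * (π : ℂ)) *
        ∫ s in (0:ℝ)..(2 * π),
          ((⟪unitDir s, t⟫ : ℝ) : ℂ) *
            Complex.exp (Complex.I * (ω : ℂ) * ((⟪unitDir s, x - z⟫ : ℝ) : ℂ)))
    (hC : C = ((Real.sqrt 2 : ℝ) : ℂ) / (2 * (π : ℂ)) *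
        ∫ s in (0:ℝ)..(2 * π),
          ((⟪unitDir s, n⟫ : ℝ) : ℂ) *
            Complex.exp (Complex.I * (ω : ℂ) * ((⟪unitDir s, x - z⟫ : ℝ) : ℂ))) :
    A ^ 2 + B ^ 2 + C ^ 2 =
      ((J0 (ω * ‖x - z‖) ^ 2 - 2 * J1 (ω * ‖x - z‖) ^ 2 : ℝ) : ℂ) := by
  have hw : x - z ≠ 0 := sub_ne_zero.mpr hxz
  have hr : ‖x - z‖ ≠ 0 := norm_ne_zero_iff.mpr hw
  obtain ⟨φ, hφ0, hφ1⟩ := exists_angle (x - z) hw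
  set u := ω * ‖x - z‖ with hu
  have hπ : (π:ℝ) ≠ 0 := Real.pi_ne_zero
  have h2π : (2 * (π:ℂ)) ≠ 0 := by
    simp [Complex.ofReal_ne_zero, Real.pi_ne_zero]
  have hinner : ∀ s : ℝ, (⟪unitDir s, x - z⟫ : ℝ) = ‖x - z‖ * Real.cos (s - φ) := by
    intro s
    rw [inner_unitDir, hφ0, hφ1, Real.cos_sub]
    ring
  have hexp : ∀ s : ℝ, Complex.exp (Complex.I * (ω:ℂ) * ((⟪unitDir s, x - z⟫ : ℝ) : ℂ))
      = Complex.exp (Complex.I * (u:ℂ) * ((Real.cos (s - φ) : ℝ) : ℂ)) := by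
    intro s
    congr 1
    rw [hinner s, hu]
    push_cast
    ring
  have hA' : A = ((J0 u : ℝ) : ℂ) := by
    rw [hA, intervalIntegral.integral_congr (g := fun s =>
        Complex.exp (Complex.I * (u:ℂ) * ((Real.cos (s - φ) : ℝ) : ℂ)))
      (fun s _ => hexp s), circ_mean0]
    field_simp
  set p := t 0 * Real.cos φ + t 1 * Real.sin φ with hp
  set q := n 0 * Real.cos φ + n 1 * Real.sin φ with hq
  have hB' : B = ((Real.sqrt 2 : ℝ):ℂ) * ((p:ℝ):ℂ) * ((J1 u : ℝ):ℂ) * Complex.I := by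
    rw [hB, intervalIntegral.integral_congr (g := fun s =>
        ((Real.cos s * t 0 + Real.sin s * t 1 : ℝ) : ℂ) *
          Complex.exp (Complex.I * (u:ℂ) * ((Real.cos (s - φ) : ℝ) : ℂ)))
      (fun s _ => by rw [hexp s, inner_unitDir]), circ_mean1]
    rw [hp]
    push_cast
    field_simp
  have hC' : C = ((Real.sqrt 2 : ℝ):ℂ) * ((q:ℝ):ℂ) * ((J1 u : ℝ):ℂ) * Complex.I := by
    rw [hC, intervalIntegral.integral_congr (g := fun s =>
        ((Real.cos s * n 0 + Real.sin s * n 1 : ℝ) : ℂ) *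
          Complex.exp (Complex.I * (u:ℂ) * ((Real.cos (s - φ) : ℝ) : ℂ)))
      (fun s _ => by rw [hexp s, inner_unitDir]), circ_mean1]
    rw [hq]
    push_cast
    field_simp
  have ht2 : (t 0)^2 + (t 1)^2 = 1 := by rw [norm_sq_expand, ht]; norm_num
  have hn2 : (n 0)^2 + (n 1)^2 = 1 := by rw [norm_sq_expand, hn]; norm_num
  have htn2 : t 0 * n 0 + t 1 * n 1 = 0 := by rw [← inner_expand]; exact htn
  have hcs : Real.cos φ ^ 2 + Real.sin φ ^ 2 = 1 := Real.cos_sq_add_sin_sq φ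
  have hpq : p^2 + q^2 = 1 := parseval _ _ _ _ _ _ ht2 hn2 htn2 hcs
  have hpqC : ((p:ℝ):ℂ)^2 + ((q:ℝ):ℂ)^2 = 1 := by exact_mod_cast hpq
  have hI : Complex.I ^ 2 = -1 := Complex.I_sq
  have hs2 : (((Real.sqrt 2 : ℝ)):ℂ)^2 = 2 := by
    rw [← Complex.ofReal_pow, Real.sq_sqrt (by norm_num)]
    norm_num
  have key : ∀ c : ℝ, (((Real.sqrt 2:ℝ):ℂ) * ((c:ℝ):ℂ) * ((J1 u:ℝ):ℂ) * Complex.I)^2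
      = -2 * ((c:ℝ):ℂ)^2 * ((J1 u:ℝ):ℂ)^2 := by
    intro c
    rw [mul_pow, mul_pow, mul_pow, hI, hs2]
    ring
  rw [hA', hB', hC', key p, key q]
  push_cast
  linear_combination (-2) * ((J1 u:ℝ):ℂ)^2 * hpqC
end

section
/- Let r > 0, let 0 < ω₁ < ω_F, and let c ∈ ℝ. Then the frequency average of the single-frequency migration values satisfies the exact identity ∫_{ω₁}^{ω_F} ( J₀(ω·r)² − 2c²·J₁(ω·r)² ) dω = ω_F·( J₀(ω_F·r)² + J₁(ω_F·r)² ) − ω₁·( J₀(ω₁·r)² + J₁(ω₁·r)² ) + (1 − 2c²)·∫_{ω₁}^{ω_F} J₁(ω·r)² dω; that is, with Λ(r; ω) := ω·(J₀(ωr)² + J₁(ωr)²), the multi-frequency subspace migration value for a single contributing point at distance r equals (1/(ω_F − ω₁))·{ Λ(r; ω_F) − Λ(r; ω₁) + (1 − 2c²)·∫_{ω₁}^{ω_F} J₁(ωr)² dω }. -/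
set_option maxHeartbeats 1000000

open MeasureTheory Real Filter
open scoped RealInnerProductSpace

lemma int_cos_cos (u : ℝ) :
    ∫ τ in (0:ℝ)..π, Real.cos τ * Real.cos (u * Real.sin τ) = 0 := by
  have h := intervalIntegral.integral_comp_sub_left
    (a := (0:ℝ)) (b := π) (fun τ => Real.cos τ * Real.cos (u * Real.sin τ)) π
  simp only [sub_zero, sub_self] at h
  have h2 : ∀ x : ℝ, Real.cos (π - x) * Real.cos (u * Real.sin (π - x)) =
      -(Real.cos x * Real.cos (u * Real.sin x)) := by
    intro x; rw [Real.cos_pi_sub, Real.sin_pi_sub]; ring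
  rw [intervalIntegral.integral_congr (fun x _ => h2 x)] at h
  rw [intervalIntegral.integral_neg] at h
  linarith

lemma J1_eq (u : ℝ) :
    J1 u = (1 / π) * ∫ τ in (0:ℝ)..π, Real.sin τ * Real.sin (u * Real.sin τ) := by
  unfold J1
  congr 1
  have h : ∀ τ ∈ Set.uIcc (0:ℝ) π, Real.cos (τ - u * Real.sin τ) =
      Real.cos τ * Real.cos (u * Real.sin τ) + Real.sin τ * Real.sin (u * Real.sin τ) := by
    intro τ _; exact Real.cos_sub τ (u * Real.sin τ)
  rw [intervalIntegral.integral_congr h,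
    intervalIntegral.integral_add
      ((Continuous.intervalIntegrable (by fun_prop) _ _))
      ((Continuous.intervalIntegrable (by fun_prop) _ _)),
    int_cos_cos, zero_add]

lemma hasDerivAt_J0 (u : ℝ) : HasDerivAt J0 (-J1 u) u := by
  have key := (intervalIntegral.hasDerivAt_integral_of_dominated_loc_of_deriv_le
    (F := fun x τ => Real.cos (x * Real.sin τ))
    (F' := fun x τ => -Real.sin τ * Real.sin (x * Real.sin τ))
    (x₀ := u) (bound := fun _ => 1) (a := 0) (b := π) (μ := volume) (s := Metric.ball u 1)
    (Metric.ball_mem_nhds u one_pos)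
    (Filter.Eventually.of_forall fun x =>
      (Continuous.aestronglyMeasurable (by fun_prop)))
    ((Continuous.intervalIntegrable (by fun_prop) _ _))
    (Continuous.aestronglyMeasurable (by fun_prop)).restrict
    (Filter.Eventually.of_forall fun τ _ x _hx => by
      rw [norm_mul, norm_neg, Real.norm_eq_abs, Real.norm_eq_abs]
      exact mul_le_one₀ (Real.abs_sin_le_one τ) (abs_nonneg _) (Real.abs_sin_le_one _))
    ((continuous_const).intervalIntegrable _ _)
    (Filter.Eventually.of_forall fun τ _ x _hx => by
      have h1 : HasDerivAt (fun x : ℝ => x * Real.sin τ) (Real.sin τ) x := by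
        simpa using (hasDerivAt_id x).mul_const (Real.sin τ)
      simpa [mul_comm] using h1.cos)).2
  have h := key.const_mul (1 / π)
  have heq : (1 / π) * ∫ τ in (0:ℝ)..π, -Real.sin τ * Real.sin (u * Real.sin τ) = -J1 u := by
    rw [J1_eq]
    rw [show (fun τ => -Real.sin τ * Real.sin (u * Real.sin τ)) =
      (fun τ => -(Real.sin τ * Real.sin (u * Real.sin τ))) from funext fun τ => by ring]
    rw [intervalIntegral.integral_neg]; ring
  rw [heq] at h
  exact h

lemma int_exact (u : ℝ) :
    ∫ τ in (0:ℝ)..π, (1 - u * Real.cos τ) * Real.cos (τ - u * Real.sin τ) = 0 := by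
  have h : ∀ τ ∈ Set.uIcc (0:ℝ) π,
      HasDerivAt (fun τ => Real.sin (τ - u * Real.sin τ))
        ((1 - u * Real.cos τ) * Real.cos (τ - u * Real.sin τ)) τ := by
    intro τ _
    have h1 : HasDerivAt (fun τ : ℝ => τ - u * Real.sin τ) (1 - u * Real.cos τ) τ :=
      (hasDerivAt_id τ).sub ((Real.hasDerivAt_sin τ).const_mul u)
    simpa [mul_comm] using h1.sin
  rw [intervalIntegral.integral_eq_sub_of_hasDerivAt h
    ((Continuous.intervalIntegrable (by fun_prop) _ _))]
  simp

lemma hasDerivAt_mul_J1 (u : ℝ) : HasDerivAt (fun x => x * J1 x) (u * J0 u) u := by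
  have hfun : (fun x : ℝ => x * J1 x) =
      fun x => (1 / π) * ∫ τ in (0:ℝ)..π, x * Real.cos (τ - x * Real.sin τ) := by
    funext x
    rw [intervalIntegral.integral_const_mul]
    unfold J1; ring
  have key := (intervalIntegral.hasDerivAt_integral_of_dominated_loc_of_deriv_le
    (F := fun x τ => x * Real.cos (τ - x * Real.sin τ))
    (F' := fun x τ => Real.cos (τ - x * Real.sin τ) +
      x * (Real.sin τ * Real.sin (τ - x * Real.sin τ)))
    (x₀ := u) (bound := fun _ => 2 + |u|) (a := 0) (b := π) (μ := volume) (s := Metric.ball u 1)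
    (Metric.ball_mem_nhds u one_pos)
    (Filter.Eventually.of_forall fun x =>
      (Continuous.aestronglyMeasurable (by fun_prop)))
    ((Continuous.intervalIntegrable (by fun_prop) _ _))
    (Continuous.aestronglyMeasurable (by fun_prop)).restrict
    (Filter.Eventually.of_forall fun τ _ x hx => by
      have hx' : |x - u| < 1 := by simpa [Real.dist_eq] using hx
      have h1 : |Real.cos (τ - x * Real.sin τ)| ≤ 1 := Real.abs_cos_le_one _
      have h2 : |x * (Real.sin τ * Real.sin (τ - x * Real.sin τ))| ≤ |x| := by
        rw [abs_mul]
        have : |Real.sin τ * Real.sin (τ - x * Real.sin τ)| ≤ 1 := by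
          rw [abs_mul]
          exact mul_le_one₀ (Real.abs_sin_le_one _) (abs_nonneg _) (Real.abs_sin_le_one _)
        nlinarith [abs_nonneg x]
      have h3 : |x| ≤ |u| + 1 := by
        have := abs_sub_abs_le_abs_sub x u
        linarith
      calc ‖Real.cos (τ - x * Real.sin τ) +
            x * (Real.sin τ * Real.sin (τ - x * Real.sin τ))‖ ≤
          |Real.cos (τ - x * Real.sin τ)| +
            |x * (Real.sin τ * Real.sin (τ - x * Real.sin τ))| := abs_add_le _ _
        _ ≤ 2 + |u| := by linarith)
    ((continuous_const).intervalIntegrable _ _)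
    (Filter.Eventually.of_forall fun τ _ x _hx => by
      have h1 : HasDerivAt (fun x : ℝ => τ - x * Real.sin τ) (-Real.sin τ) x := by
        simpa using ((hasDerivAt_id x).mul_const (Real.sin τ)).const_sub τ
      have h2 := h1.cos
      have h3 := ((hasDerivAt_id x).mul h2)
      refine h3.congr_deriv ?_
      simp only [id_eq, one_mul]; ring)).2
  -- value of the derivative integral
  have hval : ∫ τ in (0:ℝ)..π, (Real.cos (τ - u * Real.sin τ) +
      u * (Real.sin τ * Real.sin (τ - u * Real.sin τ))) =
      u * ∫ τ in (0:ℝ)..π, Real.cos (u * Real.sin τ) := by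
    have hcongr : ∀ τ ∈ Set.uIcc (0:ℝ) π,
        Real.cos (τ - u * Real.sin τ) + u * (Real.sin τ * Real.sin (τ - u * Real.sin τ)) =
        u * Real.cos (u * Real.sin τ) +
          (1 - u * Real.cos τ) * Real.cos (τ - u * Real.sin τ) := by
      intro τ _
      have h := Real.cos_sub τ (τ - u * Real.sin τ)
      rw [show τ - (τ - u * Real.sin τ) = u * Real.sin τ by ring] at h
      linear_combination -u * h
    rw [intervalIntegral.integral_congr hcongr,
      intervalIntegral.integral_add
        ((Continuous.intervalIntegrable (by fun_prop) _ _))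
        ((Continuous.intervalIntegrable (by fun_prop) _ _)),
      int_exact, add_zero, intervalIntegral.integral_const_mul]
  rw [hval] at key
  have h := key.const_mul (1 / π)
  rw [← hfun] at h
  refine h.congr_deriv ?_
  unfold J0; ring

lemma hasDerivAt_J1 (u : ℝ) (hu : u ≠ 0) :
    HasDerivAt J1 (J0 u - J1 u / u) u := by
  have hg := hasDerivAt_mul_J1 u
  have hd : HasDerivAt (fun x : ℝ => x * J1 x / x)
      ((u * J0 u * u - u * J1 u * 1) / u ^ 2) u :=
    hg.div (hasDerivAt_id u) hu
  have heq : (u * J0 u * u - u * J1 u * 1) / u ^ 2 = J0 u - J1 u / u := by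
    field_simp
  rw [heq] at hd
  apply hd.congr_of_eventuallyEq
  filter_upwards [eventually_ne_nhds hu] with x hx
  field_simp

lemma continuous_J0 : Continuous J0 :=
  continuous_iff_continuousAt.2 fun u => (hasDerivAt_J0 u).continuousAt

/-- Exact identity for the frequency average of the single-frequency migration values:
with `Λ(r; ω) = ω (J₀(ωr)² + J₁(ωr)²)`,
`∫_{ω₁}^{ω_F} (J₀(ωr)² − 2c² J₁(ωr)²) dω
  = Λ(r; ω_F) − Λ(r; ω₁) + (1 − 2c²) ∫_{ω₁}^{ω_F} J₁(ωr)² dω`. -/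
theorem multi_frequency_migration_identity (r ω₁ ωF c : ℝ) (hr : 0 < r)
    (hω₁ : 0 < ω₁) (hω : ω₁ < ωF) :
    ∫ ω in ω₁..ωF, (J0 (ω * r) ^ 2 - 2 * c ^ 2 * J1 (ω * r) ^ 2) =
      ωF * (J0 (ωF * r) ^ 2 + J1 (ωF * r) ^ 2) -
        ω₁ * (J0 (ω₁ * r) ^ 2 + J1 (ω₁ * r) ^ 2) +
        (1 - 2 * c ^ 2) * ∫ ω in ω₁..ωF, J1 (ω * r) ^ 2 := by
  have hle : ω₁ ≤ ωF := le_of_lt hω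
  have huIcc : Set.uIcc ω₁ ωF = Set.Icc ω₁ ωF := Set.uIcc_of_le hle
  have hpos : ∀ ω ∈ Set.uIcc ω₁ ωF, 0 < ω := by
    intro ω hωm; rw [huIcc] at hωm; exact lt_of_lt_of_le hω₁ hωm.1
  -- derivative of Λ
  have hΛ : ∀ ω ∈ Set.uIcc ω₁ ωF,
      HasDerivAt (fun ω => ω * (J0 (ω * r) ^ 2 + J1 (ω * r) ^ 2))
        (J0 (ω * r) ^ 2 - J1 (ω * r) ^ 2) ω := by
    intro ω hωm
    have hωpos := hpos ω hωm
    have hune : ω * r ≠ 0 := by positivity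
    have hlin : HasDerivAt (fun ω : ℝ => ω * r) r ω := by
      simpa using (hasDerivAt_id ω).mul_const r
    have h0 : HasDerivAt (fun ω => J0 (ω * r)) (-J1 (ω * r) * r) ω :=
      HasDerivAt.comp (h₂ := J0) ω (hasDerivAt_J0 (ω * r)) hlin
    have h1 : HasDerivAt (fun ω => J1 (ω * r)) ((J0 (ω * r) - J1 (ω * r) / (ω * r)) * r) ω :=
      HasDerivAt.comp (h₂ := J1) ω (hasDerivAt_J1 (ω * r) hune) hlin
    have hsum := ((h0.pow 2).add (h1.pow 2))
    have hfull := (hasDerivAt_id ω).mul hsum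
    refine hfull.congr_deriv ?_
    simp only [id_eq, Pi.add_apply, Pi.pow_apply]
    field_simp
    ring
  -- continuity / integrability
  have hJ1contOn : ContinuousOn (fun ω => J1 (ω * r)) (Set.uIcc ω₁ ωF) := by
    intro ω hωm
    have hωpos := hpos ω hωm
    have hune : ω * r ≠ 0 := by positivity
    have : ContinuousAt (fun ω : ℝ => J1 (ω * r)) ω :=
      ContinuousAt.comp (g := J1) (f := fun ω : ℝ => ω * r) (x := ω)
        (hasDerivAt_J1 (ω * r) hune).continuousAt (by fun_prop)
    exact this.continuousWithinAt
  have hJ0contOn : ContinuousOn (fun ω => J0 (ω * r)) (Set.uIcc ω₁ ωF) :=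
    (continuous_J0.comp (continuous_id.mul continuous_const)).continuousOn
  have hint1 : IntervalIntegrable (fun ω => J0 (ω * r) ^ 2 - J1 (ω * r) ^ 2) volume ω₁ ωF :=
    ((hJ0contOn.pow 2).sub (hJ1contOn.pow 2)).intervalIntegrable
  have hint2 : IntervalIntegrable (fun ω => J1 (ω * r) ^ 2) volume ω₁ ωF :=
    (hJ1contOn.pow 2).intervalIntegrable
  have hftc := intervalIntegral.integral_eq_sub_of_hasDerivAt hΛ hint1
  -- split the integrand
  have hsplit : ∫ ω in ω₁..ωF, (J0 (ω * r) ^ 2 - 2 * c ^ 2 * J1 (ω * r) ^ 2) =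
      (∫ ω in ω₁..ωF, (J0 (ω * r) ^ 2 - J1 (ω * r) ^ 2)) +
        (1 - 2 * c ^ 2) * ∫ ω in ω₁..ωF, J1 (ω * r) ^ 2 := by
    rw [← intervalIntegral.integral_const_mul,
      ← intervalIntegral.integral_add hint1 (hint2.const_mul _)]
    apply intervalIntegral.integral_congr
    intro ω _; ring
  rw [hsplit, hftc]
end
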